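/- For every ε > 0 there exists a constant C > 0 such that for every complex number ω, |∫_{-∞}^{∞} e^{iωt} Φ(t) dt| ≤ C·exp(|ω|^{1+ε}); in particular the entire function ω ↦ ∫ e^{iωt}Φ(t)dt has order at most 1. -/

import Mathlib

open MeasureTheory

/-- Polya's function `Φ(t) = ∑_{n≥1} (4π²n⁴e^{9t/2} − 6πn²e^{5t/2}) e^{−πn²e^{2t}}`. -/
noncomputable def Phi (t : ℝ) : ℝ :=
  ∑' n : ℕ,
    (4 * Real.pi ^ 2 * ((n : ℝ) + 1) ^ 4 * Real.exp (9 * t / 2)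
      - 6 * Real.pi * ((n : ℝ) + 1) ^ 2 * Real.exp (5 * t / 2))
    * Real.exp (-Real.pi * ((n : ℝ) + 1) ^ 2 * Real.exp (2 * t))

open MeasureTheory

noncomputable section PolyaAux

/-- single theta term over ℤ -/
def fz (n : ℤ) (t : ℝ) : ℝ := Real.exp (-Real.pi * (n:ℝ)^2 * Real.exp (2*t))
/-- its t-derivative -/
def fz1 (n : ℤ) (t : ℝ) : ℝ := (-2*Real.pi*(n:ℝ)^2 * Real.exp (2*t)) * fz n t
/-- its second t-derivative -/
def fz2 (n : ℤ) (t : ℝ) : ℝ :=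
  (4*Real.pi^2*(n:ℝ)^4 * Real.exp (2*t)^2 - 4*Real.pi*(n:ℝ)^2*Real.exp (2*t)) * fz n t

lemma hasDerivAt_fz (n : ℤ) (t : ℝ) : HasDerivAt (fz n) (fz1 n t) t := by
  have h0 : HasDerivAt (fun t:ℝ => 2*t) 2 t := by
    simpa using (hasDerivAt_id t).const_mul (2:ℝ)
  have h1 := h0.exp
  have h2 := (h1.const_mul (-Real.pi * (n:ℝ)^2)).exp
  convert h2 using 1
  · rfl
  unfold fz1 fz; ring

lemma hasDerivAt_fz1 (n : ℤ) (t : ℝ) : HasDerivAt (fz1 n) (fz2 n t) t := by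
  have h0 : HasDerivAt (fun t:ℝ => 2*t) 2 t := by
    simpa using (hasDerivAt_id t).const_mul (2:ℝ)
  have h1 : HasDerivAt (fun t:ℝ => -2*Real.pi*(n:ℝ)^2 * Real.exp (2*t))
      (-2*Real.pi*(n:ℝ)^2 * (Real.exp (2*t) * 2)) t := h0.exp.const_mul _
  have h2 := h1.mul (hasDerivAt_fz n t)
  exact h2.congr_deriv (by unfold fz2 fz1 fz; ring)

lemma sumNatPow (k : ℕ) {c : ℝ} (hc : 0 < c) :
    Summable fun n : ℕ => ((n:ℝ)+1)^k * Real.exp (-c * ((n:ℝ)+1)^2) := by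
  have hr : ‖Real.exp (-c)‖ < 1 := by
    rw [Real.norm_eq_abs, abs_of_pos (Real.exp_pos _)]
    exact Real.exp_lt_one_iff.2 (by linarith)
  have h := summable_pow_mul_geometric_of_norm_lt_one (R := ℝ) k hr
  have h1 := (summable_nat_add_iff 1).2 h
  refine Summable.of_nonneg_of_le (fun n => by positivity) (fun n => ?_) h1
  have hcast : ((n+1:ℕ):ℝ) = (n:ℝ)+1 := by push_cast; ring
  rw [hcast]
  have hexp : Real.exp (-c * ((n:ℝ)+1)^2) ≤ Real.exp (-c) ^ (n+1) := by
    rw [← Real.exp_nat_mul]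
    apply Real.exp_le_exp.2
    have h0n : (0:ℝ) ≤ (n:ℝ) := n.cast_nonneg
    push_cast
    nlinarith [mul_nonneg (mul_nonneg hc.le (by linarith : (0:ℝ) ≤ (n:ℝ)+1)) h0n]
  exact mul_le_mul_of_nonneg_left hexp (by positivity)

lemma sumNatPow' (k : ℕ) {c : ℝ} (hc : 0 < c) :
    Summable fun n : ℕ => (n:ℝ)^k * Real.exp (-c * (n:ℝ)^2) := by
  apply (summable_nat_add_iff 1).1
  have := sumNatPow k hc
  refine this.congr fun n => ?_
  push_cast; ring_nf

lemma sumIntPow (k : ℕ) {c : ℝ} (hc : 0 < c) :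
    Summable fun n : ℤ => ((n:ℝ)^2)^k * Real.exp (-Real.pi * (n:ℝ)^2 * c) := by
  have hc' : 0 < Real.pi * c := by positivity
  have key : ∀ x : ℝ, (x^2)^k * Real.exp (-Real.pi * x^2 * c)
      = x^(2*k) * Real.exp (-(Real.pi*c) * x^2) := by
    intro x; rw [← pow_mul]; ring_nf
  apply Summable.of_nat_of_neg
  · refine (sumNatPow' (2*k) hc').congr fun n => ?_
    rw [key]; push_cast; ring_nf
  · refine (sumNatPow' (2*k) hc').congr fun n => ?_
    rw [key]; push_cast; ring_nf
    rw [mul_comm k 2, pow_mul]; norm_num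

lemma summable_fz (t : ℝ) : Summable fun n : ℤ => fz n t := by
  refine (sumIntPow 0 (Real.exp_pos (2*t))).congr fun n => ?_
  simp [fz]

lemma summable_fz1 (t : ℝ) : Summable fun n : ℤ => fz1 n t := by
  have := (sumIntPow 1 (Real.exp_pos (2*t))).mul_left (-2*Real.pi*Real.exp (2*t))
  refine this.congr fun n => ?_
  simp only [fz1, fz, pow_one]; ring

lemma summable_fz2 (t : ℝ) : Summable fun n : ℤ => fz2 n t := by
  have h1 := (sumIntPow 2 (Real.exp_pos (2*t))).mul_left (4*Real.pi^2*Real.exp (2*t)^2)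
  have h2 := (sumIntPow 1 (Real.exp_pos (2*t))).mul_left (-(4*Real.pi*Real.exp (2*t)))
  refine (h1.add h2).congr fun n => ?_
  simp only [fz2, fz, pow_one]; ring

end PolyaAux


noncomputable section PolyaTheta

/-- theta over ℤ as function of t (a = e^{2t}) -/
def Th (t : ℝ) : ℝ := ∑' n : ℤ, fz n t
def Th1 (t : ℝ) : ℝ := ∑' n : ℤ, fz1 n t
def Th2 (t : ℝ) : ℝ := ∑' n : ℤ, fz2 n t

lemma fz_pos (n : ℤ) (t : ℝ) : 0 < fz n t := Real.exp_pos _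

lemma fz_le_fz {n : ℤ} {s t : ℝ} (h : s ≤ t) : fz n t ≤ fz n s := by
  unfold fz
  apply Real.exp_le_exp.2
  have h1 : Real.exp (2*s) ≤ Real.exp (2*t) := Real.exp_le_exp.2 (by linarith)
  nlinarith [mul_nonneg (mul_nonneg Real.pi_pos.le (sq_nonneg ((n:ℝ)))) (sub_nonneg.2 h1)]

lemma hasDerivAt_Th (t₀ : ℝ) : HasDerivAt Th (Th1 t₀) t₀ := by
  have hu : Summable fun n : ℤ =>
      (2*Real.pi*Real.exp (2*(t₀+1))) * (((n:ℝ)^2)^1 * Real.exp (-Real.pi * (n:ℝ)^2 * Real.exp (2*(t₀-1)))) :=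
    (sumIntPow 1 (Real.exp_pos _)).mul_left _
  refine hasDerivAt_tsum_of_isPreconnected (t := Set.Ioo (t₀-1) (t₀+1)) hu isOpen_Ioo isPreconnected_Ioo
    (fun n y _ => hasDerivAt_fz n y) (fun n y hy => ?_)
    (Set.mem_Ioo.2 ⟨by linarith, by linarith⟩) (summable_fz t₀)
    (Set.mem_Ioo.2 ⟨by linarith, by linarith⟩)
  obtain ⟨hy1, hy2⟩ := hy
  have hle : fz n y ≤ fz n (t₀ - 1) := fz_le_fz (by linarith)
  have hE : Real.exp (2*y) ≤ Real.exp (2*(t₀+1)) := Real.exp_le_exp.2 (by linarith)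
  rw [Real.norm_eq_abs, fz1, abs_mul, abs_of_pos (fz_pos n y)]
  have h2 : |(-2*Real.pi*(n:ℝ)^2 * Real.exp (2*y))| = 2*Real.pi*(n:ℝ)^2 * Real.exp (2*y) := by
    rw [abs_of_nonpos (by
      have : (0:ℝ) ≤ 2*Real.pi*(n:ℝ)^2*Real.exp (2*y) := by positivity
      linarith)]
    ring
  rw [h2]
  calc 2*Real.pi*(n:ℝ)^2 * Real.exp (2*y) * fz n y
      ≤ 2*Real.pi*(n:ℝ)^2 * Real.exp (2*(t₀+1)) * fz n (t₀-1) := by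
        have hn2 : (0:ℝ) ≤ (n:ℝ)^2 := sq_nonneg _
        have := Real.pi_pos
        exact mul_le_mul (mul_le_mul_of_nonneg_left hE (by positivity)) hle (fz_pos n y).le (by positivity)
    _ = (2*Real.pi*Real.exp (2*(t₀+1))) * (((n:ℝ)^2)^1 * Real.exp (-Real.pi * (n:ℝ)^2 * Real.exp (2*(t₀-1)))) := by
        unfold fz; ring

lemma hasDerivAt_Th1 (t₀ : ℝ) : HasDerivAt Th1 (Th2 t₀) t₀ := by
  have hu : Summable fun n : ℤ =>
      (4*Real.pi^2*Real.exp (2*(t₀+1))^2) * (((n:ℝ)^2)^2 * Real.exp (-Real.pi * (n:ℝ)^2 * Real.exp (2*(t₀-1))))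
      + (4*Real.pi*Real.exp (2*(t₀+1))) * (((n:ℝ)^2)^1 * Real.exp (-Real.pi * (n:ℝ)^2 * Real.exp (2*(t₀-1)))) :=
    ((sumIntPow 2 (Real.exp_pos _)).mul_left _).add ((sumIntPow 1 (Real.exp_pos _)).mul_left _)
  refine hasDerivAt_tsum_of_isPreconnected (t := Set.Ioo (t₀-1) (t₀+1)) hu isOpen_Ioo isPreconnected_Ioo
    (fun n y _ => hasDerivAt_fz1 n y) (fun n y hy => ?_)
    (Set.mem_Ioo.2 ⟨by linarith, by linarith⟩) (summable_fz1 t₀)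
    (Set.mem_Ioo.2 ⟨by linarith, by linarith⟩)
  obtain ⟨hy1, hy2⟩ := hy
  have hle : fz n y ≤ fz n (t₀ - 1) := fz_le_fz (by linarith)
  have hE : Real.exp (2*y) ≤ Real.exp (2*(t₀+1)) := Real.exp_le_exp.2 (by linarith)
  have hEpos := Real.exp_pos (2*y)
  have hn2 : (0:ℝ) ≤ (n:ℝ)^2 := sq_nonneg _
  have hpi := Real.pi_pos
  rw [Real.norm_eq_abs, fz2, abs_mul, abs_of_pos (fz_pos n y)]
  calc |4*Real.pi^2*(n:ℝ)^4 * Real.exp (2*y)^2 - 4*Real.pi*(n:ℝ)^2*Real.exp (2*y)| * fz n y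
      ≤ (4*Real.pi^2*(n:ℝ)^4 * Real.exp (2*y)^2 + 4*Real.pi*(n:ℝ)^2*Real.exp (2*y)) * fz n y := by
        apply mul_le_mul_of_nonneg_right _ (fz_pos n y).le
        refine (abs_sub _ _).trans ?_
        rw [abs_of_nonneg (by positivity), abs_of_nonneg (by positivity)]
    _ ≤ (4*Real.pi^2*(n:ℝ)^4 * Real.exp (2*(t₀+1))^2 + 4*Real.pi*(n:ℝ)^2*Real.exp (2*(t₀+1))) * fz n (t₀-1) := by
        apply mul_le_mul _ hle (fz_pos n y).le (by positivity)
        have hsq : Real.exp (2*y)^2 ≤ Real.exp (2*(t₀+1))^2 := by nlinarith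
        have g1 := mul_le_mul_of_nonneg_left hsq (by positivity : (0:ℝ) ≤ 4*Real.pi^2*(n:ℝ)^4)
        have g2 := mul_le_mul_of_nonneg_left hE (by positivity : (0:ℝ) ≤ 4*Real.pi*(n:ℝ)^2)
        linarith
    _ = _ := by unfold fz; ring

lemma Th_functional (t : ℝ) : Th t = Real.exp (-t) * Th (-t) := by
  have h := Real.tsum_exp_neg_mul_int_sq (a := Real.exp (2*t)) (Real.exp_pos _)
  have e1 : (Real.exp (2*t)) ^ ((1:ℝ)/2) = Real.exp t := by
    rw [Real.rpow_def_of_pos (Real.exp_pos _), Real.log_exp]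
    congr 1; ring
  have lhs : Th t = ∑' n : ℤ, Real.exp (-Real.pi * Real.exp (2*t) * (n:ℝ)^2) := by
    unfold Th fz
    exact tsum_congr fun n => by ring_nf
  have rhs : Th (-t) = ∑' n : ℤ, Real.exp (-Real.pi / Real.exp (2*t) * (n:ℝ)^2) := by
    unfold Th fz
    refine tsum_congr fun n => ?_
    congr 1
    rw [div_eq_mul_inv, ← Real.exp_neg]
    ring_nf
  rw [lhs, rhs, h, e1, Real.exp_neg, one_div]

end PolyaTheta

noncomputable section PolyaEven

def Gf (t : ℝ) : ℝ := Real.exp (t/2) * Th t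
def Gf1 (t : ℝ) : ℝ := Real.exp (t/2) * (Th t / 2 + Th1 t)
def Gf2 (t : ℝ) : ℝ := Real.exp (t/2) * (Th t / 4 + Th1 t + Th2 t)

lemma Gf_even (t : ℝ) : Gf (-t) = Gf t := by
  have h := Th_functional (-t)
  rw [neg_neg] at h
  unfold Gf
  rw [h, ← mul_assoc, ← Real.exp_add, show -t/2 + t = t/2 from by ring]

lemma hasDerivAt_Gf (t : ℝ) : HasDerivAt Gf (Gf1 t) t := by
  have h0 : HasDerivAt (fun t:ℝ => t/2) (1/2) t := by
    simpa using (hasDerivAt_id t).div_const 2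
  have h := (h0.exp).mul (hasDerivAt_Th t)
  refine h.congr_deriv ?_
  simp only [Gf1, Gf]; ring

lemma hasDerivAt_Gf1 (t : ℝ) : HasDerivAt Gf1 (Gf2 t) t := by
  have h0 : HasDerivAt (fun t:ℝ => t/2) (1/2) t := by
    simpa using (hasDerivAt_id t).div_const 2
  have hin : HasDerivAt (fun t => Th t / 2 + Th1 t) (Th1 t / 2 + Th2 t) t :=
    ((hasDerivAt_Th t).div_const 2).add (hasDerivAt_Th1 t)
  have h := (h0.exp).mul hin
  refine h.congr_deriv ?_
  simp only [Gf2, Gf1]; ring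

lemma Gf1_odd (t : ℝ) : Gf1 (-t) = - Gf1 t := by
  have hcomp : HasDerivAt (fun u : ℝ => Gf (-u)) (-Gf1 (-t)) t := by
    have h := (hasDerivAt_Gf (-t)).comp t (hasDerivAt_neg t)
    exact h.congr_deriv (by ring)
  have heq : (fun u : ℝ => Gf (-u)) = Gf := funext Gf_even
  rw [heq] at hcomp
  have := hcomp.unique (hasDerivAt_Gf t)
  linarith

lemma Gf2_even (t : ℝ) : Gf2 (-t) = Gf2 t := by
  have hcomp : HasDerivAt (fun u : ℝ => -Gf1 (-u)) (Gf2 (-t)) t := by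
    have h := ((hasDerivAt_Gf1 (-t)).comp t (hasDerivAt_neg t)).neg
    exact h.congr_deriv (by ring)
  have heq : (fun u : ℝ => -Gf1 (-u)) = Gf1 := funext fun u => by rw [Gf1_odd]; ring
  rw [heq] at hcomp
  exact (hcomp.unique (hasDerivAt_Gf1 t)).symm ▸ rfl

lemma Phi_formula (t : ℝ) : Phi t = (Gf2 t - Gf t / 4) / 2 := by
  have hG : Gf2 t - Gf t / 4 = Real.exp (t/2) * (Th1 t + Th2 t) := by
    unfold Gf2 Gf; ring
  have hadd : Th1 t + Th2 t = ∑' n : ℤ, (fz1 n t + fz2 n t) :=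
    (Summable.tsum_add (summable_fz1 t) (summable_fz2 t)).symm
  set v : ℤ → ℝ := fun n => fz1 n t + fz2 n t with hv
  have hvsum : Summable v := (summable_fz1 t).add (summable_fz2 t)
  have hv0 : v 0 = 0 := by simp [hv, fz1, fz2]
  have hveq : ∀ n : ℤ, v (-n) = v n := by
    intro n
    simp only [hv, fz1, fz2, fz]
    rw [show ((-n:ℤ):ℝ) = -(n:ℝ) from by push_cast; ring]
    ring_nf
  have hs1 : Summable fun n : ℕ => v n := hvsum.comp_injective (fun a b h => by exact_mod_cast h)
  have hs2 : Summable fun n : ℕ => v (-(n+1)) :=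
    hvsum.comp_injective (fun a b h => by omega)
  have hsplit : ∑' n : ℤ, v n = ∑' n : ℕ, v ((n:ℤ)) + ∑' n : ℕ, v (-((n:ℤ)+1)) :=
    tsum_of_nat_of_neg_add_one hs1 hs2
  have hneg : ∀ n : ℕ, v (-((n:ℤ)+1)) = v ((n:ℤ)+1) := fun n => by
    rw [show -((n:ℤ)+1) = -(((n:ℤ)+1)) from by ring, hveq]
  have hzero : ∑' n : ℕ, v ((n:ℤ)) = ∑' n : ℕ, v ((n:ℤ)+1) := by
    rw [Summable.tsum_eq_zero_add hs1, show ((0:ℕ):ℤ) = 0 from rfl, hv0, zero_add]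
    exact tsum_congr fun b => by rw [show ((b+1:ℕ):ℤ) = (b:ℤ)+1 from by push_cast; ring]
  have htot : ∑' n : ℤ, v n = 2 * ∑' n : ℕ, v ((n:ℤ)+1) := by
    rw [hsplit, hzero, tsum_congr hneg]; ring
  have hPhi : Phi t = Real.exp (t/2) * ∑' n : ℕ, v ((n:ℤ)+1) := by
    rw [← tsum_mul_left]
    unfold Phi
    refine tsum_congr fun n => ?_
    simp only [hv, fz1, fz2, fz]
    push_cast
    rw [show (9:ℝ)*t/2 = t/2 + (2*t + 2*t) from by ring,
        show (5:ℝ)*t/2 = t/2 + 2*t from by ring]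
    simp only [Real.exp_add]
    ring
  rw [hPhi, hG, hadd, htot]
  ring

lemma Phi_even (t : ℝ) : Phi (-t) = Phi t := by
  rw [Phi_formula, Phi_formula, Gf2_even, Gf_even]

end PolyaEven

noncomputable section PolyaBound

/-- constant in the decay bound for Phi -/
def K0 : ℝ := ∑' n : ℕ,
  (4*Real.pi^2*((n:ℝ)+1)^4 + 6*Real.pi*((n:ℝ)+1)^2) * Real.exp (-(Real.pi/2) * ((n:ℝ)+1)^2)

lemma summable_K0 : Summable fun n : ℕ =>
    (4*Real.pi^2*((n:ℝ)+1)^4 + 6*Real.pi*((n:ℝ)+1)^2) * Real.exp (-(Real.pi/2) * ((n:ℝ)+1)^2) := by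
  have hc : (0:ℝ) < Real.pi/2 := by positivity
  have h := ((sumNatPow 4 hc).mul_left (4*Real.pi^2)).add ((sumNatPow 2 hc).mul_left (6*Real.pi))
  refine h.congr fun n => ?_
  ring

lemma K0_nonneg : 0 ≤ K0 :=
  tsum_nonneg fun n => by positivity

lemma Phi_bound_nonneg {t : ℝ} (ht : 0 ≤ t) :
    |Phi t| ≤ K0 * Real.exp (9*t/2 - Real.pi/2 * Real.exp (2*t)) := by
  have hpi := Real.pi_pos
  have hX : 1 ≤ Real.exp (2*t) := by
    rw [show (1:ℝ) = Real.exp 0 from (Real.exp_zero).symm]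
    exact Real.exp_le_exp.2 (by linarith)
  -- termwise bound
  have hterm : ∀ n : ℕ,
      |(4 * Real.pi ^ 2 * ((n : ℝ) + 1) ^ 4 * Real.exp (9 * t / 2)
        - 6 * Real.pi * ((n : ℝ) + 1) ^ 2 * Real.exp (5 * t / 2))
        * Real.exp (-Real.pi * ((n : ℝ) + 1) ^ 2 * Real.exp (2 * t))|
      ≤ ((4*Real.pi^2*((n:ℝ)+1)^4 + 6*Real.pi*((n:ℝ)+1)^2) * Real.exp (-(Real.pi/2) * ((n:ℝ)+1)^2))
        * Real.exp (9*t/2 - Real.pi/2 * Real.exp (2*t)) := by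
    intro n
    set m : ℝ := (n:ℝ)+1 with hm
    have hm1 : 1 ≤ m := by
      rw [hm]
      have : (0:ℝ) ≤ (n:ℝ) := n.cast_nonneg
      linarith
    clear_value m
    have hm2 : 1 ≤ m^2 := by nlinarith
    have hkey : Real.exp (-Real.pi * m^2 * Real.exp (2*t))
        ≤ Real.exp (-(Real.pi/2) * m^2) * Real.exp (-(Real.pi/2) * Real.exp (2*t)) := by
      rw [← Real.exp_add]
      apply Real.exp_le_exp.2
      have hprod : 0 ≤ (m^2 - 1) * (Real.exp (2*t) - 1) := mul_nonneg (by linarith) (by linarith)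
      have h1 : 1 ≤ m^2 * Real.exp (2*t) := by nlinarith
      nlinarith [mul_nonneg hpi.le hprod, mul_nonneg hpi.le (by linarith : (0:ℝ) ≤ m^2 * Real.exp (2*t) - 1)]
    have he59 : Real.exp (5*t/2) ≤ Real.exp (9*t/2) := Real.exp_le_exp.2 (by linarith)
    rw [abs_mul, abs_of_pos (Real.exp_pos _)]
    calc |4 * Real.pi ^ 2 * m ^ 4 * Real.exp (9 * t / 2) - 6 * Real.pi * m ^ 2 * Real.exp (5 * t / 2)|
          * Real.exp (-Real.pi * m ^ 2 * Real.exp (2 * t))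
        ≤ (4 * Real.pi ^ 2 * m ^ 4 * Real.exp (9 * t / 2) + 6 * Real.pi * m ^ 2 * Real.exp (9 * t / 2))
          * Real.exp (-Real.pi * m ^ 2 * Real.exp (2 * t)) := by
          apply mul_le_mul_of_nonneg_right _ (Real.exp_pos _).le
          refine (abs_sub _ _).trans ?_
          rw [abs_of_nonneg (by positivity), abs_of_nonneg (by positivity)]
          have : 6 * Real.pi * m ^ 2 * Real.exp (5*t/2) ≤ 6 * Real.pi * m ^ 2 * Real.exp (9*t/2) :=
            mul_le_mul_of_nonneg_left he59 (by positivity)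
          linarith
      _ = ((4*Real.pi^2*m^4 + 6*Real.pi*m^2) * Real.exp (9*t/2))
            * Real.exp (-Real.pi * m ^ 2 * Real.exp (2 * t)) := by ring
      _ ≤ ((4*Real.pi^2*m^4 + 6*Real.pi*m^2) * Real.exp (9*t/2))
            * (Real.exp (-(Real.pi/2) * m^2) * Real.exp (-(Real.pi/2) * Real.exp (2*t))) := by
          apply mul_le_mul_of_nonneg_left hkey (by positivity)
      _ = ((4*Real.pi^2*m^4 + 6*Real.pi*m^2) * Real.exp (-(Real.pi/2) * m^2))
            * Real.exp (9*t/2 - Real.pi/2 * Real.exp (2*t)) := by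
          rw [show 9*t/2 - Real.pi/2 * Real.exp (2*t)
              = 9*t/2 + (-(Real.pi/2) * Real.exp (2*t)) from by ring, Real.exp_add]
          ring
  -- summability of abs values
  set F : ℕ → ℝ := fun n => (4 * Real.pi ^ 2 * ((n : ℝ) + 1) ^ 4 * Real.exp (9 * t / 2)
      - 6 * Real.pi * ((n : ℝ) + 1) ^ 2 * Real.exp (5 * t / 2))
      * Real.exp (-Real.pi * ((n : ℝ) + 1) ^ 2 * Real.exp (2 * t)) with hF
  set G : ℕ → ℝ := fun n => ((4*Real.pi^2*((n:ℝ)+1)^4 + 6*Real.pi*((n:ℝ)+1)^2)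
      * Real.exp (-(Real.pi/2) * ((n:ℝ)+1)^2))
      * Real.exp (9*t/2 - Real.pi/2 * Real.exp (2*t)) with hG
  have hsum_maj : Summable G := summable_K0.mul_right _
  have hsum_abs : Summable fun n => |F n| :=
    Summable.of_nonneg_of_le (fun n => abs_nonneg _) hterm hsum_maj
  have habs : |∑' n, F n| ≤ ∑' n, |F n| := by
    have h := norm_tsum_le_tsum_norm (f := F)
      (by simpa only [Real.norm_eq_abs] using hsum_abs)
    simpa only [Real.norm_eq_abs] using h
  have hle2 : ∑' n, |F n| ≤ ∑' n, G n := Summable.tsum_le_tsum hterm hsum_abs hsum_maj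
  have hPhiF : Phi t = ∑' n, F n := rfl
  have hGsum : ∑' n, G n = K0 * Real.exp (9*t/2 - Real.pi/2 * Real.exp (2*t)) := by
    rw [hG, tsum_mul_right]; rfl
  rw [hPhiF]
  linarith

lemma Phi_bound_abs (t : ℝ) :
    |Phi t| ≤ K0 * Real.exp (9*|t|/2 - Real.pi/2 * Real.exp (2*|t|)) := by
  rcases le_or_gt 0 t with ht | ht
  · rw [abs_of_nonneg ht]; exact Phi_bound_nonneg ht
  · rw [abs_of_neg ht]
    calc |Phi t| = |Phi (-t)| := by rw [Phi_even]
      _ ≤ K0 * Real.exp (9*(-t)/2 - Real.pi/2 * Real.exp (2*(-t))) := Phi_bound_nonneg (by linarith)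

end PolyaBound

section PolyaFinal

lemma pow_div_fact_le_exp (x : ℝ) (hx : 0 ≤ x) (k : ℕ) :
    x^k / (k.factorial : ℝ) ≤ Real.exp x :=
  Real.pow_div_factorial_le_exp x hx k

/-- key pointwise inequality: for `s ≥ 0`,
`B s - (π/2) e^{2s} ≤ B T - (π/2) s²` with `T = max 1 (B/A)^{1/(m-1)}`. -/
lemma key_ineq (m : ℕ) (hm : 3 ≤ m) {B s : ℝ} (hB : 0 ≤ B) (hs : 0 ≤ s) :
    B*s - Real.pi/2 * Real.exp (2*s) ≤
      B * max 1 ((B/(Real.pi/4 * 2^m / (m.factorial:ℝ)))^((1:ℝ)/((m:ℝ)-1))) - Real.pi/2 * s^2 := by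
  have hpi := Real.pi_pos
  set A : ℝ := Real.pi/4 * 2^m / (m.factorial:ℝ) with hA
  have hApos : 0 < A := by positivity
  set T : ℝ := max 1 ((B/A)^((1:ℝ)/((m:ℝ)-1))) with hT
  have hTpos : 0 < T := lt_of_lt_of_le one_pos (le_max_left _ _)
  -- lower bounds for exp(2s)
  have e1 : (2*s)^2 / 2 ≤ Real.exp (2*s) := by
    have := pow_div_fact_le_exp (2*s) (by linarith) 2
    norm_num at this
    linarith
  have e2 : (2*s)^m / (m.factorial:ℝ) ≤ Real.exp (2*s) := pow_div_fact_le_exp (2*s) (by linarith) m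
  have hexp : Real.pi/2 * s^2 + A * s^m ≤ Real.pi/2 * Real.exp (2*s) := by
    have h1 : Real.pi/4 * ((2*s)^2/2) ≤ Real.pi/4 * Real.exp (2*s) :=
      mul_le_mul_of_nonneg_left e1 (by positivity)
    have h2 : Real.pi/4 * ((2*s)^m / (m.factorial:ℝ)) ≤ Real.pi/4 * Real.exp (2*s) :=
      mul_le_mul_of_nonneg_left e2 (by positivity)
    have hms : (2*s)^m = 2^m * s^m := mul_pow 2 s m
    have hA2 : A * s^m = Real.pi/4 * ((2*s)^m / (m.factorial:ℝ)) := by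
      rw [hms, hA]; field_simp
    nlinarith
  -- main claim : B*s ≤ A*s^m + B*T
  have claim : B*s ≤ A*s^m + B*T := by
    rcases le_total s T with h | h
    · have h1 : B*s ≤ B*T := mul_le_mul_of_nonneg_left h hB
      have h2 : 0 ≤ A*s^m := by positivity
      linarith
    · have hs1 : 1 ≤ s := le_trans (le_max_left _ _) h
      have h2 : (B/A)^((1:ℝ)/((m:ℝ)-1)) ≤ s := le_trans (le_max_right _ _) h
      have hBA : (0:ℝ) ≤ B/A := by positivity
      have hm1 : (0:ℝ) < (m:ℝ) - 1 := by
        have : (3:ℝ) ≤ (m:ℝ) := by exact_mod_cast hm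
        linarith
      have hpow : B/A ≤ s^(m-1) := by
        have h3 := Real.rpow_le_rpow (Real.rpow_nonneg hBA _) h2 hm1.le
        rw [← Real.rpow_mul hBA, one_div, inv_mul_cancel₀ (ne_of_gt hm1), Real.rpow_one] at h3
        have hc : ((m-1:ℕ):ℝ) = (m:ℝ)-1 := by
          rw [Nat.cast_sub (by omega : 1 ≤ m)]
          norm_num
        rwa [← hc, Real.rpow_natCast] at h3
      have h4 : B/A*s ≤ s^(m-1)*s := mul_le_mul_of_nonneg_right hpow hs
      have h5 : s^(m-1)*s = s^m := by
        rw [← pow_succ]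
        congr 1
        omega
      have h6 : B*s = A*(B/A*s) := by field_simp
      have h7 : A*(B/A*s) ≤ A*(s^(m-1)*s) := mul_le_mul_of_nonneg_left h4 hApos.le
      have h8 : 0 ≤ B*T := mul_nonneg hB hTpos.le
      rw [h5] at h7
      linarith
  linarith

end PolyaFinal

lemma calib {ε δ c1 : ℝ} (hε : 0 < ε) (hδpos : 0 < δ) (hδ : δ ≤ ε/2) (hc1 : 0 ≤ c1) :
    ∃ c3 : ℝ, 0 ≤ c3 ∧ ∀ b : ℝ, 0 ≤ b →
      (b+9/2) + c1 * (b+9/2)^((1:ℝ)+δ) ≤ b^((1:ℝ)+ε) + c3 := by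
  set p : ℝ := 1 + ε/2 with hp
  set c2 : ℝ := 1 + c1 with hc2
  set c4 : ℝ := 2^(p:ℝ) * c2 with hc4
  have hc2pos : 0 < c2 := by linarith
  have hc4pos : 0 < c4 := by
    apply mul_pos _ hc2pos
    exact Real.rpow_pos_of_pos (by norm_num) _
  clear_value p
  set b1 : ℝ := max (9/2) (c4^((2:ℝ)/ε)) with hb1
  have hb1pos : (0:ℝ) < b1 := lt_of_lt_of_le (by norm_num) (le_max_left _ _)
  have hb1a : (9:ℝ)/2 ≤ b1 := hb1 ▸ le_max_left _ _
  have hb1b : c4^((2:ℝ)/ε) ≤ b1 := hb1 ▸ le_max_right _ _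
  clear_value b1
  clear_value c2 c4
  refine ⟨c2 * (b1+9/2)^(p:ℝ), mul_nonneg hc2pos.le (Real.rpow_nonneg (by linarith) _), ?_⟩
  intro b hb
  set B : ℝ := b + 9/2 with hB
  have hB1 : (1:ℝ) ≤ B := by rw [hB]; linarith
  have hBpos : (0:ℝ) < B := by linarith
  clear_value B
  -- step 1 : B + c1 * B^{1+δ} ≤ c2 * B^p
  have s1 : B + c1 * B^((1:ℝ)+δ) ≤ c2 * B^(p:ℝ) := by
    have e1 : B ≤ B^(p:ℝ) := by
      nth_rewrite 1 [show B = B^(1:ℝ) from (Real.rpow_one B).symm]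
      exact Real.rpow_le_rpow_of_exponent_le hB1 (by rw [hp]; linarith)
    have e2 : B^((1:ℝ)+δ) ≤ B^(p:ℝ) :=
      Real.rpow_le_rpow_of_exponent_le hB1 (by rw [hp]; linarith)
    have e3 : c1 * B^((1:ℝ)+δ) ≤ c1 * B^(p:ℝ) := mul_le_mul_of_nonneg_left e2 hc1
    rw [hc2]; linarith
  rcases le_total b b1 with hcase | hcase
  · have e4 : B^(p:ℝ) ≤ (b1+9/2)^(p:ℝ) :=
      Real.rpow_le_rpow (by linarith) (by rw [hB]; linarith) (by rw [hp]; linarith)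
    have e5 : c2 * B^(p:ℝ) ≤ c2 * (b1+9/2)^(p:ℝ) := mul_le_mul_of_nonneg_left e4 hc2pos.le
    have e6 : (0:ℝ) ≤ b^((1:ℝ)+ε) := Real.rpow_nonneg hb _
    linarith
  · -- b ≥ b1 : c2 B^p ≤ c4 b^p ≤ b^{ε/2} b^p = b^{1+ε}
    have hb92 : (9:ℝ)/2 ≤ b := le_trans hb1a hcase
    have hbpos : (0:ℝ) < b := by linarith
    have hB2b : B ≤ 2*b := by rw [hB]; linarith
    have e7 : B^(p:ℝ) ≤ (2*b)^(p:ℝ) :=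
      Real.rpow_le_rpow (by linarith) hB2b (by rw [hp]; linarith)
    have e8 : ((2:ℝ)*b)^(p:ℝ) = 2^(p:ℝ) * b^(p:ℝ) :=
      Real.mul_rpow (by norm_num) hb
    have e9 : c2 * B^(p:ℝ) ≤ c4 * b^(p:ℝ) := by
      calc c2 * B^(p:ℝ) ≤ c2 * (2^(p:ℝ) * b^(p:ℝ)) := by
            rw [← e8]; exact mul_le_mul_of_nonneg_left e7 hc2pos.le
        _ = c4 * b^(p:ℝ) := by rw [hc4]; ring
    have e10 : c4 ≤ b^(ε/2:ℝ) := by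
      have h1 : c4^((2:ℝ)/ε) ≤ b := le_trans hb1b hcase
      have h2 := Real.rpow_le_rpow (Real.rpow_nonneg hc4pos.le _) h1 (by positivity : (0:ℝ) ≤ ε/2)
      rwa [← Real.rpow_mul hc4pos.le, div_mul_div_comm, mul_comm (2:ℝ) ε,
        show ε * 2 / (ε * 2) = 1 from div_self (by positivity), Real.rpow_one] at h2
    have e11 : c4 * b^(p:ℝ) ≤ b^(ε/2:ℝ) * b^(p:ℝ) :=
      mul_le_mul_of_nonneg_right e10 (Real.rpow_nonneg hb _)
    have e12 : b^(ε/2:ℝ) * b^(p:ℝ) = b^((1:ℝ)+ε) := by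
      rw [← Real.rpow_add hbpos]
      congr 1
      rw [hp]; ring
    have e13 : (0:ℝ) ≤ c2 * (b1+9/2)^(p:ℝ) :=
      mul_nonneg hc2pos.le (Real.rpow_nonneg (by linarith) _)
    linarith

/-- The entire function `ω ↦ ∫ e^{iωt} Φ(t) dt` has order at most 1:
for every `ε > 0` there is `C > 0` with `|∫ e^{iωt}Φ(t)dt| ≤ C exp(|ω|^{1+ε})`. -/
theorem xi_order_le_one :
    ∀ ε : ℝ, 0 < ε → ∃ C : ℝ, 0 < C ∧ ∀ ω : ℂ,
      ‖∫ t : ℝ, Complex.exp (Complex.I * ω * t) * (Phi t : ℂ)‖ ≤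
        C * Real.exp (‖ω‖ ^ (1 + ε)) := by
  intro ε hε
  -- choose the auxiliary integer m and constants
  set m : ℕ := ⌈(2:ℝ)/ε⌉₊ + 3 with hmdef
  have hm3 : 3 ≤ m := by omega
  have hmgt : (2:ℝ)/ε + 2 ≤ (m:ℝ) := by
    have h := Nat.le_ceil ((2:ℝ)/ε)
    have h2 : (m:ℝ) = (⌈(2:ℝ)/ε⌉₊:ℝ) + 3 := by rw [hmdef]; push_cast; ring
    linarith
  have h2e : (0:ℝ) < 2/ε := by positivity
  have hm1pos : (0:ℝ) < (m:ℝ) - 1 := by linarith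
  set δ : ℝ := (1:ℝ)/((m:ℝ)-1) with hδdef
  have hδpos : 0 < δ := by rw [hδdef]; positivity
  have hδle : δ ≤ ε/2 := by
    have h2 : (2:ℝ)/ε ≤ (m:ℝ)-1 := by linarith
    have h3 := one_div_le_one_div_of_le h2e h2
    rw [one_div_div] at h3
    rw [hδdef]; linarith
  set A : ℝ := Real.pi/4 * 2^m / (m.factorial:ℝ) with hAdef
  have hApos : 0 < A := by rw [hAdef]; positivity
  set c1 : ℝ := (1/A)^(δ:ℝ) with hc1def
  have hc1 : 0 ≤ c1 := Real.rpow_nonneg (by positivity) _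
  obtain ⟨c3, hc3, hcal⟩ := calib hε hδpos hδle hc1
  have hK0 := K0_nonneg
  refine ⟨(K0+1) * 2 * Real.exp c3,
    mul_pos (mul_pos (by linarith) two_pos) (Real.exp_pos _), ?_⟩
  intro ω
  set b : ℝ := ‖ω‖ with hbdef
  have hb : 0 ≤ b := norm_nonneg ω
  set B : ℝ := b + 9/2 with hBdef
  have hBpos : (0:ℝ) < B := by rw [hBdef]; linarith
  set T : ℝ := max 1 ((B/A)^(δ:ℝ)) with hTdef
  set D : ℝ := B * T with hDdef
  clear_value D T B b c1 A δ
  -- pointwise bound on the integrand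
  have hpt : ∀ t : ℝ, ‖Complex.exp (Complex.I * ω * t) * (Phi t : ℂ)‖
      ≤ (K0+1) * Real.exp D * Real.exp (-(Real.pi/2) * t^2) := by
    intro t
    have h1 : ‖Complex.exp (Complex.I * ω * t) * (Phi t : ℂ)‖
        = Real.exp ((Complex.I * ω * (t:ℂ)).re) * |Phi t| := by
      rw [norm_mul, Complex.norm_exp, Complex.norm_real, Real.norm_eq_abs]
    have h2 : (Complex.I * ω * (t:ℂ)).re = -(ω.im * t) := by simp [Complex.mul_re]
    have h3 : -(ω.im * t) ≤ b * |t| := by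
      calc -(ω.im * t) ≤ |(-(ω.im * t))| := le_abs_self _
        _ = |ω.im| * |t| := by rw [abs_neg, abs_mul]
        _ ≤ b * |t| := by
            apply mul_le_mul_of_nonneg_right _ (abs_nonneg t)
            rw [hbdef]
            exact Complex.abs_im_le_norm ω
    have h4 := Phi_bound_abs t
    have h5 : Real.exp ((Complex.I * ω * (t:ℂ)).re) * |Phi t|
        ≤ Real.exp (b*|t|) * (K0 * Real.exp (9*|t|/2 - Real.pi/2 * Real.exp (2*|t|))) := by
      apply mul_le_mul _ h4 (abs_nonneg _) (Real.exp_pos _).le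
      rw [h2]
      exact Real.exp_le_exp.2 h3
    have h6 : Real.exp (b*|t|) * (K0 * Real.exp (9*|t|/2 - Real.pi/2 * Real.exp (2*|t|)))
        = K0 * Real.exp (B*|t| - Real.pi/2 * Real.exp (2*|t|)) := by
      rw [show B*|t| - Real.pi/2 * Real.exp (2*|t|)
          = b*|t| + (9*|t|/2 - Real.pi/2 * Real.exp (2*|t|)) from by rw [hBdef]; ring,
        Real.exp_add]
      ring
    have h7 := key_ineq m hm3 (B := B) (s := |t|) hBpos.le (abs_nonneg t)
    rw [← hAdef, ← hδdef, ← hTdef, ← hDdef, sq_abs] at h7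
    have h8 : K0 * Real.exp (B*|t| - Real.pi/2 * Real.exp (2*|t|))
        ≤ K0 * Real.exp (D - Real.pi/2 * t^2) := by
      apply mul_le_mul_of_nonneg_left _ hK0
      exact Real.exp_le_exp.2 h7
    have h9 : K0 * Real.exp (D - Real.pi/2 * t^2)
        ≤ (K0+1) * Real.exp D * Real.exp (-(Real.pi/2) * t^2) := by
      rw [show D - Real.pi/2 * t^2 = D + (-(Real.pi/2) * t^2) from by ring, Real.exp_add,
        ← mul_assoc]
      apply mul_le_mul_of_nonneg_right _ (Real.exp_pos _).le
      apply mul_le_mul_of_nonneg_right _ (Real.exp_pos _).le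
      linarith
    rw [h1]
    linarith
  -- integrate the bound
  have hgint : Integrable (fun t : ℝ => (K0+1) * Real.exp D * Real.exp (-(Real.pi/2) * t^2)) :=
    (integrable_exp_neg_mul_sq (by positivity : (0:ℝ) < Real.pi/2)).const_mul _
  have hInt := MeasureTheory.norm_integral_le_of_norm_le hgint (Filter.Eventually.of_forall hpt)
  have hval : (∫ t : ℝ, (K0+1) * Real.exp D * Real.exp (-(Real.pi/2) * t^2))
      = (K0+1) * Real.exp D * Real.sqrt (Real.pi/(Real.pi/2)) := by
    rw [MeasureTheory.integral_const_mul]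
    congr 1
    simpa using integral_gaussian (Real.pi/2)
  have hsq : Real.sqrt (Real.pi/(Real.pi/2)) ≤ 2 := by
    have hpi := Real.pi_pos
    have h2 : Real.pi/(Real.pi/2) = 2 := by field_simp
    rw [h2]
    nlinarith [Real.sq_sqrt (by norm_num : (0:ℝ) ≤ 2), Real.sqrt_nonneg 2]
  -- exponent comparison
  have hD : D ≤ b^((1:ℝ)+ε) + c3 := by
    have hrn : (0:ℝ) ≤ (B/A)^(δ:ℝ) := Real.rpow_nonneg (by positivity) _
    have hmax : T ≤ 1 + (B/A)^(δ:ℝ) := by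
      rw [hTdef]
      exact max_le (by linarith) (by linarith)
    have h9 : D ≤ B * (1 + (B/A)^(δ:ℝ)) := by
      rw [hDdef]
      exact mul_le_mul_of_nonneg_left hmax hBpos.le
    have h10 : B * (1 + (B/A)^(δ:ℝ)) = B + c1 * B^((1:ℝ)+δ) := by
      rw [hc1def, div_eq_mul_inv B A,
        Real.mul_rpow hBpos.le (inv_nonneg.2 hApos.le), one_div,
        Real.rpow_add hBpos, Real.rpow_one]
      ring
    have h11 := hcal b hb
    rw [← hBdef] at h11
    linarith
  -- finish
  have hfin : (K0+1) * Real.exp D * Real.sqrt (Real.pi/(Real.pi/2))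
      ≤ (K0+1) * 2 * Real.exp c3 * Real.exp (b^((1:ℝ)+ε)) := by
    have e1 : (K0+1) * Real.exp D * Real.sqrt (Real.pi/(Real.pi/2)) ≤ (K0+1) * Real.exp D * 2 :=
      mul_le_mul_of_nonneg_left hsq (by positivity)
    have e2 : Real.exp D ≤ Real.exp (b^((1:ℝ)+ε) + c3) := Real.exp_le_exp.2 hD
    have e3 : (K0+1) * Real.exp D * 2 ≤ (K0+1) * Real.exp (b^((1:ℝ)+ε) + c3) * 2 := by
      apply mul_le_mul_of_nonneg_right _ (by norm_num)
      exact mul_le_mul_of_nonneg_left e2 (by linarith)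
    have e4 : (K0+1) * Real.exp (b^((1:ℝ)+ε) + c3) * 2
        = (K0+1) * 2 * Real.exp c3 * Real.exp (b^((1:ℝ)+ε)) := by
      rw [Real.exp_add]; ring
    linarith
  rw [hval] at hInt
  calc ‖∫ t : ℝ, Complex.exp (Complex.I * ω * t) * (Phi t : ℂ)‖
      ≤ (K0+1) * Real.exp D * Real.sqrt (Real.pi/(Real.pi/2)) := hInt
    _ ≤ (K0+1) * 2 * Real.exp c3 * Real.exp (b^((1:ℝ)+ε)) := hfin
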